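/- arXiv:1607.07593 — 2 statements merged into one kernel-verified Lean document; each statement's English description precedes it below -/
import Mathlib

section
/- Let F : ℝ² → ℝ be three times continuously differentiable. Fix (x,y) ∈ ℝ² and define U(ε) = F(x + ε·F_y(x,y), y − ε·F_x(x,y)), where F_x, F_y are the partial derivatives of F. Then U is three times differentiable at 0 and U'''(0) = F_y(x,y)·∂_x(H(F))(x,y) − F_x(x,y)·∂_y(H(F))(x,y), where H(F) = F_xx·F_y² − 2·F_xy·F_x·F_y + F_yy·F_x². That is, the coefficient of ε³ in the Taylor expansion of U at ε = 0 equals (1/6) times the derivative of H(F) along the vector field V = F_y·∂_x − F_x·∂_y. -/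
/-- Partial derivative in the first variable of a function `ℝ × ℝ → ℝ`. -/
noncomputable def pdx (F : ℝ × ℝ → ℝ) (p : ℝ × ℝ) : ℝ := fderiv ℝ F p (1, 0)

/-- Partial derivative in the second variable of a function `ℝ × ℝ → ℝ`. -/
noncomputable def pdy (F : ℝ × ℝ → ℝ) (p : ℝ × ℝ) : ℝ := fderiv ℝ F p (0, 1)

/-- `H(F) = F_xx F_y² - 2 F_xy F_x F_y + F_yy F_x²`. -/
noncomputable def hessH (F : ℝ × ℝ → ℝ) (p : ℝ × ℝ) : ℝ :=
  pdx (pdx F) p * (pdy F p) ^ 2 - 2 * pdx (pdy F) p * pdx F p * pdy F p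
    + pdy (pdy F) p * (pdx F p) ^ 2

noncomputable def Dv (a b : ℝ) (G : ℝ × ℝ → ℝ) (q : ℝ × ℝ) : ℝ :=
  a * pdx G q - b * pdy G q

lemma contDiff_pdx {F : ℝ × ℝ → ℝ} {n m : WithTop ℕ∞}
    (hF : ContDiff ℝ n F) (h : m + 1 ≤ n) : ContDiff ℝ m (pdx F) :=
  (hF.fderiv_right h).clm_apply contDiff_const

lemma contDiff_pdy {F : ℝ × ℝ → ℝ} {n m : WithTop ℕ∞}
    (hF : ContDiff ℝ n F) (h : m + 1 ≤ n) : ContDiff ℝ m (pdy F) :=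
  (hF.fderiv_right h).clm_apply contDiff_const

lemma contDiff_Dv {G : ℝ × ℝ → ℝ} {n m : WithTop ℕ∞} (a b : ℝ)
    (hG : ContDiff ℝ n G) (h : m + 1 ≤ n) : ContDiff ℝ m (Dv a b G) :=
  (contDiff_const.mul (contDiff_pdx hG h)).sub (contDiff_const.mul (contDiff_pdy hG h))

lemma pd_symm {G : ℝ × ℝ → ℝ} (hG : ContDiff ℝ 2 G) (q : ℝ × ℝ) :
    pdx (pdy G) q = pdy (pdx G) q := by
  have hd : DifferentiableAt ℝ (fderiv ℝ G) q :=
    ((hG.fderiv_right (m := 1) le_rfl).differentiable one_ne_zero).differentiableAt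
  have h1 : pdx (pdy G) q = fderiv ℝ (fderiv ℝ G) q (1, 0) (0, 1) := by
    show fderiv ℝ (fun z => fderiv ℝ G z (0, 1)) q (1, 0) = _
    rw [fderiv_clm_apply hd (differentiableAt_const _)]
    simp
  have h2 : pdy (pdx G) q = fderiv ℝ (fderiv ℝ G) q (0, 1) (1, 0) := by
    show fderiv ℝ (fun z => fderiv ℝ G z (1, 0)) q (0, 1) = _
    rw [fderiv_clm_apply hd (differentiableAt_const _)]
    simp
  rw [h1, h2, (hG.contDiffAt.isSymmSndFDerivAt (by simp [minSmoothness_of_isRCLikeNormedField])).eq]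

lemma deriv_line {G : ℝ × ℝ → ℝ} (hG : Differentiable ℝ G) (a b x y : ℝ) :
    deriv (fun ε : ℝ => G (x + ε * a, y - ε * b))
      = fun t : ℝ => Dv a b G (x + t * a, y - t * b) := by
  funext t
  have hγ : HasDerivAt (fun ε : ℝ => ((x + ε * a, y - ε * b) : ℝ × ℝ)) (a, -b) t := by
    apply HasDerivAt.prodMk
    · simpa using ((hasDerivAt_id t).mul_const a).const_add x
    · simpa using ((hasDerivAt_id t).mul_const b).const_sub y
  have h := (hG (x + t * a, y - t * b)).hasFDerivAt.comp_hasDerivAt t hγ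
  have hv : fderiv ℝ G (x + t * a, y - t * b) (a, -b)
      = Dv a b G (x + t * a, y - t * b) := by
    have e : ((a, -b) : ℝ × ℝ) = a • (1, 0) + (-b) • (0, 1) := by
      simp [Prod.ext_iff]
    rw [e, map_add, map_smul, map_smul]
    simp [Dv, pdx, pdy]
    ring
  rw [← hv]
  exact h.deriv

lemma pd_apply_comb {f g : ℝ × ℝ → ℝ} {q : ℝ × ℝ} (hf : DifferentiableAt ℝ f q)
    (hg : DifferentiableAt ℝ g q) (a b : ℝ) (w : ℝ × ℝ) :
    fderiv ℝ (fun z => a * f z - b * g z) q w = a * fderiv ℝ f q w - b * fderiv ℝ g q w := by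
  rw [fderiv_fun_sub ((hf.const_mul a)) ((hg.const_mul b)), fderiv_const_mul hf, fderiv_const_mul hg]
  simp

lemma pdx_comb {f g : ℝ × ℝ → ℝ} {q : ℝ × ℝ} (hf : DifferentiableAt ℝ f q)
    (hg : DifferentiableAt ℝ g q) (a b : ℝ) :
    pdx (fun z => a * f z - b * g z) q = a * pdx f q - b * pdx g q :=
  pd_apply_comb hf hg a b (1, 0)

lemma pdy_comb {f g : ℝ × ℝ → ℝ} {q : ℝ × ℝ} (hf : DifferentiableAt ℝ f q)
    (hg : DifferentiableAt ℝ g q) (a b : ℝ) :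
    pdy (fun z => a * f z - b * g z) q = a * pdy f q - b * pdy g q :=
  pd_apply_comb hf hg a b (0, 1)

lemma pdx_Dv {G : ℝ × ℝ → ℝ} (hG : ContDiff ℝ 2 G) (a b : ℝ) (q : ℝ × ℝ) :
    pdx (Dv a b G) q = a * pdx (pdx G) q - b * pdx (pdy G) q := by
  have hf : DifferentiableAt ℝ (pdx G) q :=
    ((contDiff_pdx (m := 1) hG le_rfl).differentiable one_ne_zero).differentiableAt
  have hg : DifferentiableAt ℝ (pdy G) q :=
    ((contDiff_pdy (m := 1) hG le_rfl).differentiable one_ne_zero).differentiableAt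
  exact pdx_comb hf hg a b

lemma pdy_Dv {G : ℝ × ℝ → ℝ} (hG : ContDiff ℝ 2 G) (a b : ℝ) (q : ℝ × ℝ) :
    pdy (Dv a b G) q = a * pdy (pdx G) q - b * pdy (pdy G) q := by
  have hf : DifferentiableAt ℝ (pdx G) q :=
    ((contDiff_pdx (m := 1) hG le_rfl).differentiable one_ne_zero).differentiableAt
  have hg : DifferentiableAt ℝ (pdy G) q :=
    ((contDiff_pdy (m := 1) hG le_rfl).differentiable one_ne_zero).differentiableAt
  exact pdy_comb hf hg a b

lemma Dv3_expand {F : ℝ × ℝ → ℝ} (hF : ContDiff ℝ 3 F) (a b : ℝ) (p : ℝ × ℝ) :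
    Dv a b (Dv a b (Dv a b F)) p =
      a * (a * (a * pdx (pdx (pdx F)) p - b * pdx (pdx (pdy F)) p)
         - b * (a * pdx (pdy (pdx F)) p - b * pdx (pdy (pdy F)) p))
    - b * (a * (a * pdy (pdx (pdx F)) p - b * pdy (pdx (pdy F)) p)
         - b * (a * pdy (pdy (pdx F)) p - b * pdy (pdy (pdy F)) p)) := by
  have hF2 : ContDiff ℝ 2 F := hF.of_le (by norm_num)
  have hDv2 : ContDiff ℝ 2 (Dv a b F) := contDiff_Dv a b hF (by norm_num)
  have hx2 : ContDiff ℝ 2 (pdx F) := contDiff_pdx hF (by norm_num)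
  have hy2 : ContDiff ℝ 2 (pdy F) := contDiff_pdy hF (by norm_num)
  have dxx : DifferentiableAt ℝ (pdx (pdx F)) p :=
    ((contDiff_pdx (m := 1) hx2 le_rfl).differentiable one_ne_zero).differentiableAt
  have dxy : DifferentiableAt ℝ (pdx (pdy F)) p :=
    ((contDiff_pdx (m := 1) hy2 le_rfl).differentiable one_ne_zero).differentiableAt
  have dyx : DifferentiableAt ℝ (pdy (pdx F)) p :=
    ((contDiff_pdy (m := 1) hx2 le_rfl).differentiable one_ne_zero).differentiableAt
  have dyy : DifferentiableAt ℝ (pdy (pdy F)) p :=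
    ((contDiff_pdy (m := 1) hy2 le_rfl).differentiable one_ne_zero).differentiableAt
  have e2x : pdx (Dv a b F) = fun q => a * pdx (pdx F) q - b * pdx (pdy F) q :=
    funext fun q => pdx_Dv hF2 a b q
  have e2y : pdy (Dv a b F) = fun q => a * pdy (pdx F) q - b * pdy (pdy F) q :=
    funext fun q => pdy_Dv hF2 a b q
  show a * pdx (Dv a b (Dv a b F)) p - b * pdy (Dv a b (Dv a b F)) p = _
  rw [pdx_Dv hDv2 a b p, pdy_Dv hDv2 a b p, e2x, e2y,
    pdx_comb dxx dxy a b, pdx_comb dyx dyy a b, pdy_comb dxx dxy a b, pdy_comb dyx dyy a b]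

lemma fderiv_hessH {F : ℝ × ℝ → ℝ} (hF : ContDiff ℝ 3 F) (p : ℝ × ℝ) (w : ℝ × ℝ) :
    fderiv ℝ (hessH F) p w =
      fderiv ℝ (pdx (pdx F)) p w * pdy F p ^ 2
      + 2 * pdx (pdx F) p * pdy F p * fderiv ℝ (pdy F) p w
      - 2 * fderiv ℝ (pdx (pdy F)) p w * pdx F p * pdy F p
      - 2 * pdx (pdy F) p * fderiv ℝ (pdx F) p w * pdy F p
      - 2 * pdx (pdy F) p * pdx F p * fderiv ℝ (pdy F) p w
      + fderiv ℝ (pdy (pdy F)) p w * pdx F p ^ 2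
      + 2 * pdy (pdy F) p * pdx F p * fderiv ℝ (pdx F) p w := by
  have hx2 : ContDiff ℝ 2 (pdx F) := contDiff_pdx hF (by norm_num)
  have hy2 : ContDiff ℝ 2 (pdy F) := contDiff_pdy hF (by norm_num)
  have dA : DifferentiableAt ℝ (pdx (pdx F)) p :=
    ((contDiff_pdx (m := 1) hx2 le_rfl).differentiable one_ne_zero).differentiableAt
  have dB : DifferentiableAt ℝ (pdx (pdy F)) p :=
    ((contDiff_pdx (m := 1) hy2 le_rfl).differentiable one_ne_zero).differentiableAt
  have dC : DifferentiableAt ℝ (pdy (pdy F)) p :=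
    ((contDiff_pdy (m := 1) hy2 le_rfl).differentiable one_ne_zero).differentiableAt
  have dP : DifferentiableAt ℝ (pdx F) p := (hx2.differentiable two_ne_zero).differentiableAt
  have dQ : DifferentiableAt ℝ (pdy F) p := (hy2.differentiable two_ne_zero).differentiableAt
  have h := ((dA.hasFDerivAt.mul (dQ.hasFDerivAt.mul dQ.hasFDerivAt)).sub
      (((dB.hasFDerivAt.const_mul 2).mul dP.hasFDerivAt).mul dQ.hasFDerivAt)).add
      (dC.hasFDerivAt.mul (dP.hasFDerivAt.mul dP.hasFDerivAt))
  have e : hessH F = fun q => (pdx (pdx F) q * (pdy F q * pdy F q)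
      - 2 * pdx (pdy F) q * pdx F q * pdy F q)
      + pdy (pdy F) q * (pdx F q * pdx F q) := by
    funext q; simp [hessH]; ring
  rw [show pdx (pdx F) * (pdy F * pdy F) - (fun y => 2 * pdx (pdy F) y) * pdx F * pdy F
      + pdy (pdy F) * (pdx F * pdx F) = hessH F from e.symm] at h
  rw [h.fderiv]
  simp only [ContinuousLinearMap.add_apply, ContinuousLinearMap.sub_apply,
    ContinuousLinearMap.smul_apply, smul_eq_mul, Pi.mul_apply]
  ring

lemma pdx_hessH {F : ℝ × ℝ → ℝ} (hF : ContDiff ℝ 3 F) (p : ℝ × ℝ) :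
    pdx (hessH F) p =
      pdx (pdx (pdx F)) p * pdy F p ^ 2
      + 2 * pdx (pdx F) p * pdy F p * pdx (pdy F) p
      - 2 * pdx (pdx (pdy F)) p * pdx F p * pdy F p
      - 2 * pdx (pdy F) p * pdx (pdx F) p * pdy F p
      - 2 * pdx (pdy F) p * pdx F p * pdx (pdy F) p
      + pdx (pdy (pdy F)) p * pdx F p ^ 2
      + 2 * pdy (pdy F) p * pdx F p * pdx (pdx F) p :=
  fderiv_hessH hF p (1, 0)

lemma pdy_hessH {F : ℝ × ℝ → ℝ} (hF : ContDiff ℝ 3 F) (p : ℝ × ℝ) :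
    pdy (hessH F) p =
      pdy (pdx (pdx F)) p * pdy F p ^ 2
      + 2 * pdx (pdx F) p * pdy F p * pdy (pdy F) p
      - 2 * pdy (pdx (pdy F)) p * pdx F p * pdy F p
      - 2 * pdx (pdy F) p * pdy (pdx F) p * pdy F p
      - 2 * pdx (pdy F) p * pdx F p * pdy (pdy F) p
      + pdy (pdy (pdy F)) p * pdx F p ^ 2
      + 2 * pdy (pdy F) p * pdx F p * pdy (pdx F) p :=
  fderiv_hessH hF p (0, 1)

/-- For a `C³` function `F`, the function `U(ε) = F(x + ε F_y, y - ε F_x)` is three times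
differentiable and `U'''(0)` equals the derivative of `H(F)` along the field
`V = F_y ∂_x - F_x ∂_y`. -/
theorem third_deriv_eq_deriv_of_hess_along_skew_gradient
    (F : ℝ × ℝ → ℝ) (hF : ContDiff ℝ 3 F) (x y : ℝ)
    (U : ℝ → ℝ)
    (hU : U = fun ε : ℝ => F (x + ε * pdy F (x, y), y - ε * pdx F (x, y))) :
    ContDiff ℝ 3 U ∧
      iteratedDeriv 3 U 0 =
        pdy F (x, y) * pdx (hessH F) (x, y) - pdx F (x, y) * pdy (hessH F) (x, y) := by
  have hF2 : ContDiff ℝ 2 F := hF.of_le (by norm_num)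
  set a := pdy F (x, y) with haa
  set b := pdx F (x, y) with hbb
  have hγ3 : ContDiff ℝ 3 (fun ε : ℝ => ((x + ε * a, y - ε * b) : ℝ × ℝ)) :=
    (contDiff_const.add (contDiff_id.mul contDiff_const)).prodMk
      (contDiff_const.sub (contDiff_id.mul contDiff_const))
  have hU3 : ContDiff ℝ 3 U := by rw [hU]; exact hF.comp hγ3
  refine ⟨hU3, ?_⟩
  have hFd : Differentiable ℝ F := hF.differentiable (by norm_num)
  have hD1 : Differentiable ℝ (Dv a b F) :=
    (contDiff_Dv a b hF (by norm_num : (1 : WithTop ℕ∞) + 1 ≤ 3)).differentiable one_ne_zero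
  have hD2 : Differentiable ℝ (Dv a b (Dv a b F)) :=
    (contDiff_Dv a b (contDiff_Dv a b hF (by norm_num : (2 : WithTop ℕ∞) + 1 ≤ 3))
      (le_refl ((1 : WithTop ℕ∞) + 1))).differentiable one_ne_zero
  have d1 : deriv U = fun t : ℝ => Dv a b F (x + t * a, y - t * b) := by
    rw [hU]; exact deriv_line hFd a b x y
  have d2 : deriv (deriv U)
      = fun t : ℝ => Dv a b (Dv a b F) (x + t * a, y - t * b) := by
    rw [d1]; exact deriv_line hD1 a b x y
  have d3 : deriv (deriv (deriv U))
      = fun t : ℝ => Dv a b (Dv a b (Dv a b F)) (x + t * a, y - t * b) := by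
    rw [d2]; exact deriv_line hD2 a b x y
  have key : iteratedDeriv 3 U 0 = Dv a b (Dv a b (Dv a b F)) (x, y) := by
    rw [show (3 : ℕ) = 0 + 1 + 1 + 1 by norm_num, iteratedDeriv_succ, iteratedDeriv_succ,
      iteratedDeriv_succ, iteratedDeriv_zero, d3]
    norm_num
  rw [key]
  have hx2 : ContDiff ℝ 2 (pdx F) := contDiff_pdx hF (by norm_num)
  have hy2 : ContDiff ℝ 2 (pdy F) := contDiff_pdy hF (by norm_num)
  have e_sym : pdy (pdx F) = pdx (pdy F) := funext fun q => (pd_symm hF2 q).symm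
  have k1 : pdy (pdx (pdx F)) (x, y) = pdx (pdx (pdy F)) (x, y) := by
    rw [← pd_symm hx2 (x, y), e_sym]
  have k2 : pdy (pdx (pdy F)) (x, y) = pdx (pdy (pdy F)) (x, y) :=
    (pd_symm hy2 (x, y)).symm
  rw [Dv3_expand hF a b (x, y), pdx_hessH hF (x, y), pdy_hessH hF (x, y), e_sym, k1, k2]
  ring
end

section
/- Let Ω ⊂ ℝ² be open and let F : ℝ² → ℝ be three times continuously differentiable. Suppose that for every (x,y) ∈ Ω the function ε ↦ F(x + ε·F_y(x,y), y − ε·F_x(x,y)) is even in ε in some neighborhood of ε = 0 (i.e., its values at ε and −ε coincide for all small ε). Then F_y·∂_x(H(F)) − F_x·∂_y(H(F)) = 0 at every point of Ω, where H(F) = F_xx·F_y² − 2·F_xy·F_x·F_y + F_yy·F_x². That is, H(F) has zero derivative along the vector field V = F_y·∂_x − F_x·∂_y tangent to the level curves of F. -/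
section helpers

variable {f g : ℝ × ℝ → ℝ} {p : ℝ × ℝ}

lemma pd_pair (f : ℝ × ℝ → ℝ) (p w : ℝ × ℝ) :
    fderiv ℝ f p w = w.1 * pdx f p + w.2 * pdy f p := by
  have hw : w = w.1 • ((1 : ℝ), (0 : ℝ)) + w.2 • ((0 : ℝ), (1 : ℝ)) := by
    ext <;> simp
  conv_lhs => rw [hw]
  rw [map_add, map_smul, map_smul]
  simp [pdx, pdy]

lemma pd_mul (hf : DifferentiableAt ℝ f p) (hg : DifferentiableAt ℝ g p) (u : ℝ × ℝ) :
    fderiv ℝ (fun q => f q * g q) p u = fderiv ℝ f p u * g p + f p * fderiv ℝ g p u := by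
  rw [fderiv_fun_mul hf hg]
  simp only [ContinuousLinearMap.add_apply, ContinuousLinearMap.coe_smul',
    Pi.smul_apply, smul_eq_mul]
  ring

lemma pd_add (hf : DifferentiableAt ℝ f p) (hg : DifferentiableAt ℝ g p) (u : ℝ × ℝ) :
    fderiv ℝ (fun q => f q + g q) p u = fderiv ℝ f p u + fderiv ℝ g p u := by
  rw [fderiv_fun_add hf hg]; simp

lemma pd_sub (hf : DifferentiableAt ℝ f p) (hg : DifferentiableAt ℝ g p) (u : ℝ × ℝ) :
    fderiv ℝ (fun q => f q - g q) p u = fderiv ℝ f p u - fderiv ℝ g p u := by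
  rw [fderiv_fun_sub hf hg]; simp

lemma pd_const_mul (c : ℝ) (hf : DifferentiableAt ℝ f p) (u : ℝ × ℝ) :
    fderiv ℝ (fun q => c * f q) p u = c * fderiv ℝ f p u := by
  rw [fderiv_const_mul hf c]; simp

lemma contDiff_pd {n m : WithTop ℕ∞} (h : ContDiff ℝ n f) (hmn : m + 1 ≤ n) (w : ℝ × ℝ) :
    ContDiff ℝ m (fun q => fderiv ℝ f q w) :=
  (h.fderiv_right hmn).clm_apply contDiff_const

lemma pd_comm (h : ContDiff ℝ 2 f) (p : ℝ × ℝ) : pdy (pdx f) p = pdx (pdy f) p := by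
  have hd : Differentiable ℝ (fderiv ℝ f) :=
    (h.fderiv_right (by norm_num : (1:WithTop ℕ∞)+1 ≤ 2)).differentiable (by norm_num)
  have hsymm : IsSymmSndFDerivAt ℝ f p := h.contDiffAt.isSymmSndFDerivAt (by norm_num)
  have e : ∀ w u : ℝ × ℝ,
      fderiv ℝ (fun q => fderiv ℝ f q w) p u = fderiv ℝ (fderiv ℝ f) p u w := by
    intro w u
    rw [fderiv_clm_apply (hd p) (differentiableAt_const w)]
    simp
  show fderiv ℝ (fun q => fderiv ℝ f q (1, 0)) p (0, 1)
      = fderiv ℝ (fun q => fderiv ℝ f q (0, 1)) p (1, 0)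
  rw [e, e, hsymm]

end helpers

/-- If for every point of an open set `Ω` the function
`ε ↦ F(x + ε F_y, y - ε F_x)` is even in `ε` near `ε = 0`, then `H(F)` has zero
derivative along the field `V = F_y ∂_x - F_x ∂_y` on `Ω`. -/
theorem hess_constant_along_skew_gradient_of_even
    (F : ℝ × ℝ → ℝ) (hF : ContDiff ℝ 3 F)
    (Ω : Set (ℝ × ℝ)) (hΩ : IsOpen Ω)
    (heven : ∀ p ∈ Ω, ∃ δ > (0 : ℝ), ∀ ε : ℝ, |ε| < δ →
      F (p.1 + ε * pdy F p, p.2 - ε * pdx F p) =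
        F (p.1 - ε * pdy F p, p.2 + ε * pdx F p)) :
    ∀ p ∈ Ω, pdy F p * pdx (hessH F) p - pdx F p * pdy (hessH F) p = 0 := by
  intro p hp
  have dF : Differentiable ℝ F := hF.differentiable (by norm_num)
  have c2x : ContDiff ℝ 2 (pdx F) := contDiff_pd hF (by norm_num) (1, 0)
  have c2y : ContDiff ℝ 2 (pdy F) := contDiff_pd hF (by norm_num) (0, 1)
  have c1xx : ContDiff ℝ 1 (pdx (pdx F)) := contDiff_pd c2x (by norm_num) (1, 0)
  have c1xy : ContDiff ℝ 1 (pdx (pdy F)) := contDiff_pd c2y (by norm_num) (1, 0)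
  have c1yy : ContDiff ℝ 1 (pdy (pdy F)) := contDiff_pd c2y (by norm_num) (0, 1)
  have dx : Differentiable ℝ (pdx F) := c2x.differentiable (by norm_num)
  have dy : Differentiable ℝ (pdy F) := c2y.differentiable (by norm_num)
  have dxx : Differentiable ℝ (pdx (pdx F)) := c1xx.differentiable (by norm_num)
  have dxy : Differentiable ℝ (pdx (pdy F)) := c1xy.differentiable (by norm_num)
  have dyy : Differentiable ℝ (pdy (pdy F)) := c1yy.differentiable (by norm_num)
  -- Clairaut symmetry
  have hswap : pdy (pdx F) = pdx (pdy F) :=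
    funext fun q => pd_comm (hF.of_le (by norm_num)) q
  have hcF : pdy (pdx F) p = pdx (pdy F) p := pd_comm (hF.of_le (by norm_num)) p
  have h3a : pdy (pdx (pdx F)) p = pdx (pdx (pdy F)) p := by
    rw [pd_comm c2x p, hswap]
  have h3b : pdy (pdx (pdy F)) p = pdx (pdy (pdy F)) p := pd_comm c2y p
  -- the line through p in the skew gradient direction
  set v : ℝ × ℝ := (pdy F p, -pdx F p) with hv
  set L : ℝ → ℝ × ℝ := fun ε => (p.1 + ε * pdy F p, p.2 - ε * pdx F p) with hLdef
  have hLd : ∀ ε : ℝ, HasDerivAt L v ε := by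
    intro ε
    have h1 : HasDerivAt (fun ε : ℝ => p.1 + ε * pdy F p) (pdy F p) ε := by
      simpa using ((hasDerivAt_id ε).mul_const (pdy F p)).const_add p.1
    have h2 : HasDerivAt (fun ε : ℝ => p.2 - ε * pdx F p) (-pdx F p) ε := by
      simpa using ((hasDerivAt_id ε).mul_const (pdx F p)).const_sub p.2
    exact h1.prodMk h2
  have hL0 : L 0 = p := by simp [hLdef]
  have chain : ∀ (f : ℝ × ℝ → ℝ), Differentiable ℝ f →
      deriv (fun ε => f (L ε)) = fun ε => fderiv ℝ f (L ε) v := by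
    intro f hf
    funext ε
    exact (((hf (L ε)).hasFDerivAt).comp_hasDerivAt ε (hLd ε)).deriv
  set D1 : ℝ × ℝ → ℝ := fun q => fderiv ℝ F q v with hD1
  set D2 : ℝ × ℝ → ℝ := fun q => fderiv ℝ D1 q v with hD2
  set D3 : ℝ × ℝ → ℝ := fun q => fderiv ℝ D2 q v with hD3def
  have cD1 : ContDiff ℝ 2 D1 := contDiff_pd hF (by norm_num) v
  have cD2 : ContDiff ℝ 1 D2 := contDiff_pd cD1 (by norm_num) v
  have dD1 : Differentiable ℝ D1 := cD1.differentiable (by norm_num)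
  have dD2 : Differentiable ℝ D2 := cD2.differentiable (by norm_num)
  set g : ℝ → ℝ := fun ε => F (L ε) with hgdef
  have hg1 : deriv g = fun ε => D1 (L ε) := chain F dF
  have hg2 : deriv (deriv g) = fun ε => D2 (L ε) := by rw [hg1]; exact chain D1 dD1
  have hg3 : deriv (deriv (deriv g)) 0 = D3 p := by
    rw [hg2, chain D2 dD2]
    show D3 (L 0) = D3 p
    rw [hL0]
  -- evenness kills the third derivative
  obtain ⟨δ, hδ, hev⟩ := heven p hp
  have hsmall : ∀ᶠ ε : ℝ in nhds 0, |ε| < δ := by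
    simpa using eventually_abs_sub_lt (0 : ℝ) hδ
  have hgev : g =ᶠ[nhds (0 : ℝ)] fun ε => g (-ε) := by
    filter_upwards [hsmall] with ε hε
    have h := hev ε hε
    show F (L ε) = F (L (-ε))
    rw [hLdef]
    simp only
    rw [h]
    norm_num [sub_eq_add_neg]
  have e1 : deriv (deriv (deriv g)) 0 = deriv (deriv (deriv fun ε => g (-ε))) 0 :=
    hgev.deriv.deriv.deriv.eq_of_nhds
  have hneg1 : deriv (fun ε => g (-ε)) = fun ε => -deriv g (-ε) :=
    funext fun x => deriv_comp_neg g x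
  have hneg2 : deriv (deriv fun ε => g (-ε)) = fun ε => deriv (deriv g) (-ε) := by
    rw [hneg1]
    funext x
    rw [deriv.fun_neg, deriv_comp_neg (deriv g) x]
    ring
  have hneg3 : deriv (deriv (deriv fun ε => g (-ε))) 0 = -deriv (deriv (deriv g)) 0 := by
    rw [hneg2, deriv_comp_neg (deriv (deriv g)) 0]
    norm_num
  have hz : D3 p = 0 := by
    rw [← hg3]
    have := e1.trans hneg3
    linarith
  -- expand D3 p in terms of partial derivatives
  have E1 : D1 = fun q => pdy F p * pdx F q + (-pdx F p) * pdy F q := by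
    funext q
    rw [hD1]
    simp only
    rw [pd_pair F q v, hv]
  have E2 : D2 = fun q => (pdy F p * pdy F p) * pdx (pdx F) q
      + (-(2 * pdy F p * pdx F p)) * pdx (pdy F) q
      + (pdx F p * pdx F p) * pdy (pdy F) q := by
    funext q
    rw [hD2]
    simp only
    rw [E1,
      pd_add ((dx q).const_mul (pdy F p)) ((dy q).const_mul (-pdx F p)) v,
      pd_const_mul (pdy F p) (dx q) v, pd_const_mul (-pdx F p) (dy q) v,
      pd_pair (pdx F) q v, pd_pair (pdy F) q v, hv]
    have hc : pdy (pdx F) q = pdx (pdy F) q := pd_comm (hF.of_le (by norm_num)) q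
    rw [hc]
    ring
  have E3 : D3 p =
      (pdy F p * pdy F p) * (pdy F p * pdx (pdx (pdx F)) p + (-pdx F p) * pdy (pdx (pdx F)) p)
      + (-(2 * pdy F p * pdx F p)) *
          (pdy F p * pdx (pdx (pdy F)) p + (-pdx F p) * pdy (pdx (pdy F)) p)
      + (pdx F p * pdx F p) *
          (pdy F p * pdx (pdy (pdy F)) p + (-pdx F p) * pdy (pdy (pdy F)) p) := by
    rw [hD3def]
    simp only
    rw [E2,
      pd_add (((dxx p).const_mul _).fun_add ((dxy p).const_mul _)) ((dyy p).const_mul _) v,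
      pd_add ((dxx p).const_mul _) ((dxy p).const_mul _) v,
      pd_const_mul _ (dxx p) v, pd_const_mul _ (dxy p) v, pd_const_mul _ (dyy p) v,
      pd_pair (pdx (pdx F)) p v, pd_pair (pdx (pdy F)) p v, pd_pair (pdy (pdy F)) p v, hv]
  rw [h3a, h3b] at E3
  rw [E3] at hz
  -- expand the derivatives of hessH
  have hessEq : hessH F = fun q => pdx (pdx F) q * (pdy F q * pdy F q)
      - 2 * (pdx (pdy F) q * (pdx F q * pdy F q)) + pdy (pdy F) q * (pdx F q * pdx F q) := by
    funext q; simp only [hessH]; ring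
  have pdH : ∀ u : ℝ × ℝ, fderiv ℝ (hessH F) p u =
      (fderiv ℝ (pdx (pdx F)) p u * (pdy F p * pdy F p)
        + pdx (pdx F) p * (fderiv ℝ (pdy F) p u * pdy F p + pdy F p * fderiv ℝ (pdy F) p u))
      - 2 * (fderiv ℝ (pdx (pdy F)) p u * (pdx F p * pdy F p)
        + pdx (pdy F) p * (fderiv ℝ (pdx F) p u * pdy F p + pdx F p * fderiv ℝ (pdy F) p u))
      + (fderiv ℝ (pdy (pdy F)) p u * (pdx F p * pdx F p)
        + pdy (pdy F) p * (fderiv ℝ (pdx F) p u * pdx F p + pdx F p * fderiv ℝ (pdx F) p u)) := by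
    intro u
    rw [hessEq]
    rw [pd_add (((dxx p).fun_mul ((dy p).fun_mul (dy p))).fun_sub
          (((dxy p).fun_mul ((dx p).fun_mul (dy p))).const_mul 2))
        ((dyy p).fun_mul ((dx p).fun_mul (dx p))) u,
      pd_sub ((dxx p).fun_mul ((dy p).fun_mul (dy p)))
        (((dxy p).fun_mul ((dx p).fun_mul (dy p))).const_mul 2) u,
      pd_mul (dxx p) ((dy p).fun_mul (dy p)) u, pd_mul (dy p) (dy p) u,
      pd_const_mul 2 ((dxy p).fun_mul ((dx p).fun_mul (dy p))) u,
      pd_mul (dxy p) ((dx p).fun_mul (dy p)) u, pd_mul (dx p) (dy p) u,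
      pd_mul (dyy p) ((dx p).fun_mul (dx p)) u, pd_mul (dx p) (dx p) u]
  have hx : pdx (hessH F) p = _ := pdH (1, 0)
  have hy : pdy (hessH F) p = _ := pdH (0, 1)
  have epdx : ∀ f : ℝ × ℝ → ℝ, fderiv ℝ f p ((1 : ℝ), (0 : ℝ)) = pdx f p := fun _ => rfl
  have epdy : ∀ f : ℝ × ℝ → ℝ, fderiv ℝ f p ((0 : ℝ), (1 : ℝ)) = pdy f p := fun _ => rfl
  simp only [epdx, epdy] at hx hy
  rw [hx, hy, hcF, h3a, h3b]
  linear_combination hz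
end
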